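/- arXiv:1810.02309 — 4 statements merged into one kernel-verified Lean document; each statement's English description precedes it below -/
import Mathlib

section
/- Let M be a kn × ℓn real matrix partitioned into k×ℓ blocks M_{ij}, each of size n×n, such that each block satisfies rank(Z₁ M_{ij} − M_{ij} Z₋₁) ≤ r, where Z₁ and Z₋₁ are the n×n unit-f-circulant matrices with f = 1 and f = −1 respectively. Then, with Z₁ of size kn×kn and Z₋₁ of size ℓn×ℓn, rank(Z₁ M − M Z₋₁) ≤ r·k·ℓ + 2k + 2ℓ. That is, a block matrix of Toeplitz-like matrices of displacement rank r is Toeplitz-like with displacement rank at most rkℓ + 2k + 2ℓ. -/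
open Matrix

/-- The `n × n` unit-f-circulant matrix `Z_f`: ones on the subdiagonal
(`(Z_f)_{i+1,i} = 1`), `f` in the top-right corner (`(Z_f)_{0,n-1} = f`),
and zeros elsewhere. -/
def Zf (n : ℕ) (f : ℝ) : Matrix (Fin n) (Fin n) ℝ :=
  Matrix.of fun i j =>
    if (i : ℕ) = (j : ℕ) + 1 then 1 else if (i : ℕ) = 0 ∧ (j : ℕ) = n - 1 then f else 0

theorem block_index_lt {k n : ℕ} (i : Fin k) (a : Fin n) :
    (i : ℕ) * n + (a : ℕ) < k * n := by
  nlinarith [i.isLt, a.isLt]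

open Module

set_option linter.unusedSectionVars false
set_option maxHeartbeats 1000000

section helpers
variable {m n m' n' : Type*} [Fintype m] [Fintype n] [Fintype m'] [Fintype n']

lemma myrank_add_le (A B : Matrix m n ℝ) : (A + B).rank ≤ A.rank + B.rank := by
  classical
  have h : LinearMap.range (A + B).mulVecLin ≤
      LinearMap.range A.mulVecLin ⊔ LinearMap.range B.mulVecLin := by
    rintro x ⟨v, rfl⟩
    rw [Matrix.mulVecLin_add]
    exact Submodule.add_mem_sup ⟨v, rfl⟩ ⟨v, rfl⟩
  refine le_trans (Submodule.finrank_mono h) ?_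
  exact Submodule.finrank_add_le_finrank_add_finrank _ _

lemma myrank_sub_le [DecidableEq n] (A B : Matrix m n ℝ) : (A - B).rank ≤ A.rank + B.rank := by
  have h1 : A - B = A + B * (-1 : Matrix n n ℝ) := by
    simp [sub_eq_add_neg, Matrix.mul_neg]
  rw [h1]
  exact (myrank_add_le _ _).trans (add_le_add le_rfl (Matrix.rank_mul_le_left _ _))

lemma myrank_sum_le {ι : Type*} (s : Finset ι) (A : ι → Matrix m n ℝ) :
    (∑ i ∈ s, A i).rank ≤ ∑ i ∈ s, (A i).rank := by
  classical
  induction s using Finset.cons_induction with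
  | empty => simp
  | cons i s hi ih =>
    rw [Finset.sum_cons, Finset.sum_cons]
    exact (myrank_add_le _ _).trans (add_le_add le_rfl ih)

lemma myrank_submatrix (A : Matrix m n ℝ) (e₁ : m' ≃ m) (e₂ : n' ≃ n) :
    (A.submatrix e₁ e₂).rank = A.rank := by
  rw [Matrix.rank, Matrix.rank, Matrix.mulVecLin_submatrix,
    show LinearMap.funLeft ℝ ℝ ⇑e₁ = (LinearEquiv.funCongrLeft ℝ ℝ e₁ :
      (m → ℝ) →ₗ[ℝ] (m' → ℝ)) from rfl,
    show LinearMap.funLeft ℝ ℝ ⇑e₂.symm = (LinearEquiv.funCongrLeft ℝ ℝ e₂.symm :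
      (n' → ℝ) →ₗ[ℝ] (n → ℝ)) from rfl,
    LinearMap.range_comp, LinearMap.range_comp, LinearEquiv.range, Submodule.map_top,
    LinearEquiv.finrank_map_eq]

end helpers

lemma nat_block_eq {n i j a b : ℕ} (ha : a < n) (hb : b < n)
    (h : a + n * i = b + n * j) : i = j ∧ a = b := by
  have h1 : (a + n * i) % n = (b + n * j) % n := by rw [h]
  rw [Nat.add_mul_mod_self_left, Nat.add_mul_mod_self_left,
    Nat.mod_eq_of_lt ha, Nat.mod_eq_of_lt hb] at h1
  subst h1
  have h2 : n * i = n * j := by omega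
  exact ⟨Nat.eq_of_mul_eq_mul_left (by omega) h2, rfl⟩

lemma shift_eq_iff {n i j a b : ℕ} (ha : a < n) (ha0 : a ≠ 0) (hb : b < n) :
    a + n * i = b + 1 + n * j ↔ i = j ∧ a = b + 1 := by
  constructor
  · intro h
    rcases Nat.lt_or_ge (b + 1) n with hb1 | hb1
    · exact nat_block_eq ha hb1 h
    · have hbn : b + 1 = n := by omega
      have h2 : a + n * i = 0 + n * (j + 1) := by rw [h, hbn]; ring
      exact absurd (nat_block_eq ha (by omega) h2).2 ha0
  · rintro ⟨rfl, rfl⟩; rfl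

lemma Zf_offrow {k n : ℕ} (f : ℝ) (p q : Fin k × Fin n) (hp : (p.2 : ℕ) ≠ 0) :
    Zf (k * n) f (finProdFinEquiv p) (finProdFinEquiv q) =
      (if p.1 = q.1 then Zf n f p.2 q.2 else 0) := by
  obtain ⟨i, a⟩ := p
  obtain ⟨j, b⟩ := q
  simp only [Zf, Matrix.of_apply, finProdFinEquiv_apply_val] at *
  have hne : ¬ ((a : ℕ) + n * (i : ℕ) = 0 ∧ (b : ℕ) + n * (j : ℕ) = k * n - 1) := by
    intro h; omega
  rw [show (b : ℕ) + n * (j : ℕ) + 1 = ((b : ℕ) + 1) + n * (j : ℕ) from by ring]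
  simp only [shift_eq_iff a.isLt hp b.isLt]
  by_cases hij : i = j
  · subst hij
    by_cases hab : (a : ℕ) = (b : ℕ) + 1
    · simp [hab]
    · rw [if_neg (fun h => hab h.2), if_neg hne, if_pos rfl, if_neg hab,
        if_neg (fun h => hp h.1)]
  · rw [if_neg (fun h => hij (Fin.ext h.1)), if_neg hne, if_neg hij]

lemma myrank_rowsupp {k n : ℕ} {m' : Type*} [Fintype m'] (hn : 0 < n)
    (E : Matrix (Fin k × Fin n) m' ℝ)
    (hE : ∀ p : Fin k × Fin n, (p.2 : ℕ) ≠ 0 → ∀ c, E p c = 0) :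
    E.rank ≤ k := by
  classical
  set F : Matrix (Fin k × Fin n) (Fin k) ℝ :=
    Matrix.of fun p j => if p.1 = j ∧ (p.2 : ℕ) = 0 then 1 else 0 with hF
  set G : Matrix (Fin k) m' ℝ := Matrix.of fun j c => E (j, ⟨0, hn⟩) c with hG
  have hEF : E = F * G := by
    ext p c
    rw [Matrix.mul_apply]
    by_cases hp : (p.2 : ℕ) = 0
    · have hp2 : p = (p.1, ⟨0, hn⟩) := by
        obtain ⟨p1, p2⟩ := p
        simp only [Prod.mk.injEq, true_and]
        exact Fin.ext hp
      rw [hp2]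
      simp [hF, hG, ite_and]
    · rw [hE p hp c]
      simp [hF, hG, hp]
  rw [hEF]
  refine (Matrix.rank_mul_le_right _ _).trans ?_
  exact (Matrix.rank_le_card_height G).trans (by simp)

lemma myrank_embed {k l n : ℕ} (i : Fin k) (j : Fin l) (C : Matrix (Fin n) (Fin n) ℝ) :
    (Matrix.of fun (p : Fin k × Fin n) (q : Fin l × Fin n) =>
       if p.1 = i ∧ q.1 = j then C p.2 q.2 else 0).rank ≤ C.rank := by
  classical
  set P : Matrix (Fin k × Fin n) (Fin n) ℝ :=
    Matrix.of fun p a => if p.1 = i ∧ p.2 = a then 1 else 0 with hP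
  set Q : Matrix (Fin n) (Fin l × Fin n) ℝ :=
    Matrix.of fun a q => if q.1 = j ∧ q.2 = a then 1 else 0 with hQ
  have key : (Matrix.of fun (p : Fin k × Fin n) (q : Fin l × Fin n) =>
       if p.1 = i ∧ q.1 = j then C p.2 q.2 else 0) = P * (C * Q) := by
    ext p q
    rw [Matrix.mul_apply]
    simp only [hP, hQ, Matrix.of_apply, Matrix.mul_apply, ite_and]
    by_cases hpi : p.1 = i
    · simp only [hpi, if_pos rfl]
      rw [Finset.sum_eq_single p.2]
      · simp only [if_pos rfl, one_mul]
        by_cases hqj : q.1 = j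
        · simp only [hqj, if_pos rfl]
          rw [Finset.sum_eq_single q.2]
          · simp
          · intro b _ hb; simp [Ne.symm hb]
          · simp
        · simp only [if_neg hqj]
          simp [Finset.sum_ite_eq, hqj]
      · intro a _ ha; simp [Ne.symm ha]
      · simp
    · simp [hpi]
  rw [key]
  exact (Matrix.rank_mul_le_right _ _).trans (Matrix.rank_mul_le_left _ _)

/-- **Block matrices of Toeplitz-like matrices are Toeplitz-like.**
If each `n × n` block of the `kn × ℓn` matrix `M` has displacement rank at most `r` with
respect to `(Z₁, Z₋₁)`, then `M` has displacement rank at most `r*k*ℓ + 2*k + 2*ℓ` with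
respect to `(Z₁, Z₋₁)` of the appropriate sizes. -/
theorem toeplitz_like_block (n k ℓ r : ℕ)
    (M : Matrix (Fin (k * n)) (Fin (ℓ * n)) ℝ)
    (h : ∀ (i : Fin k) (j : Fin ℓ),
      (Zf n 1 *
          Matrix.of (fun a b : Fin n =>
            M ⟨(i : ℕ) * n + a, block_index_lt i a⟩ ⟨(j : ℕ) * n + b, block_index_lt j b⟩) -
        Matrix.of (fun a b : Fin n =>
            M ⟨(i : ℕ) * n + a, block_index_lt i a⟩ ⟨(j : ℕ) * n + b, block_index_lt j b⟩) *
          Zf n (-1)).rank ≤ r) :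
    (Zf (k * n) 1 * M - M * Zf (ℓ * n) (-1)).rank ≤ r * k * ℓ + 2 * k + 2 * ℓ := by
  classical
  rcases Nat.eq_zero_or_pos n with hn | hn
  · have h0 := Matrix.rank_le_card_height (Zf (k * n) 1 * M - M * Zf (ℓ * n) (-1))
    simp [hn] at h0
    omega
  -- main case
  set M' : Matrix (Fin k × Fin n) (Fin ℓ × Fin n) ℝ :=
    M.submatrix finProdFinEquiv finProdFinEquiv with hM'
  set Z₁ : Matrix (Fin k × Fin n) (Fin k × Fin n) ℝ :=
    (Zf (k * n) 1).submatrix finProdFinEquiv finProdFinEquiv with hZ₁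
  set Z₂ : Matrix (Fin ℓ × Fin n) (Fin ℓ × Fin n) ℝ :=
    (Zf (ℓ * n) (-1)).submatrix finProdFinEquiv finProdFinEquiv with hZ₂
  have hsub : (Zf (k * n) 1 * M - M * Zf (ℓ * n) (-1)).rank = (Z₁ * M' - M' * Z₂).rank := by
    rw [← myrank_submatrix (Zf (k * n) 1 * M - M * Zf (ℓ * n) (-1)) finProdFinEquiv
      finProdFinEquiv]
    congr 1
    have ha : Z₁ * M' = (Zf (k * n) 1 * M).submatrix finProdFinEquiv finProdFinEquiv :=
      Matrix.submatrix_mul_equiv _ _ _ _ _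
    have hb : M' * Z₂ = (M * Zf (ℓ * n) (-1)).submatrix finProdFinEquiv finProdFinEquiv :=
      Matrix.submatrix_mul_equiv _ _ _ _ _
    ext p q
    simp [ha, hb]
  rw [hsub]
  set D₁ : Matrix (Fin k × Fin n) (Fin k × Fin n) ℝ :=
    Matrix.of (fun p q => if p.1 = q.1 then Zf n 1 p.2 q.2 else 0) with hD₁
  set D₂ : Matrix (Fin ℓ × Fin n) (Fin ℓ × Fin n) ℝ :=
    Matrix.of (fun p q => if p.1 = q.1 then Zf n (-1) p.2 q.2 else 0) with hD₂
  have hsplit : Z₁ * M' - M' * Z₂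
      = (D₁ * M' - M' * D₂) + ((Z₁ - D₁) * M' - M' * (Z₂ - D₂)) := by
    rw [Matrix.sub_mul, Matrix.mul_sub]; abel
  rw [hsplit]
  refine le_trans (myrank_add_le _ _) ?_
  have hrow1 : ∀ p : Fin k × Fin n, (p.2 : ℕ) ≠ 0 → ∀ c, (Z₁ - D₁) p c = 0 := by
    intro p hp q
    simp only [Matrix.sub_apply, hZ₁, Matrix.submatrix_apply, hD₁, Matrix.of_apply]
    rw [Zf_offrow 1 p q hp, sub_self]
  have hrow2 : ∀ p : Fin ℓ × Fin n, (p.2 : ℕ) ≠ 0 → ∀ c, (Z₂ - D₂) p c = 0 := by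
    intro p hp q
    simp only [Matrix.sub_apply, hZ₂, Matrix.submatrix_apply, hD₂, Matrix.of_apply]
    rw [Zf_offrow (-1) p q hp, sub_self]
  have h2a : ((Z₁ - D₁) * M').rank ≤ k :=
    le_trans (Matrix.rank_mul_le_left _ _) (myrank_rowsupp hn _ hrow1)
  have h2b : (M' * (Z₂ - D₂)).rank ≤ ℓ :=
    le_trans (Matrix.rank_mul_le_right _ _) (myrank_rowsupp hn _ hrow2)
  have h2 : ((Z₁ - D₁) * M' - M' * (Z₂ - D₂)).rank ≤ k + ℓ :=
    le_trans (myrank_sub_le _ _) (by omega)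
  have hblk : ∀ (i : Fin k) (a : Fin n) (j : Fin ℓ) (b : Fin n),
      M' (i, a) (j, b) =
        M ⟨(i : ℕ) * n + a, block_index_lt i a⟩ ⟨(j : ℕ) * n + b, block_index_lt j b⟩ := by
    intro i a j b
    show M (finProdFinEquiv (i, a)) (finProdFinEquiv (j, b)) = _
    congr 1 <;>
      exact Fin.ext (by simp only [finProdFinEquiv_apply_val]; ring)
  have h1 : (D₁ * M' - M' * D₂).rank ≤ r * k * ℓ := by
    have hBC : D₁ * M' - M' * D₂ = ∑ x : Fin k × Fin ℓ,
        Matrix.of (fun (p : Fin k × Fin n) (q : Fin ℓ × Fin n) =>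
          if p.1 = x.1 ∧ q.1 = x.2 then
            (Zf n 1 *
              Matrix.of (fun a b : Fin n =>
                M ⟨(x.1 : ℕ) * n + a, block_index_lt x.1 a⟩
                  ⟨(x.2 : ℕ) * n + b, block_index_lt x.2 b⟩) -
             Matrix.of (fun a b : Fin n =>
                M ⟨(x.1 : ℕ) * n + a, block_index_lt x.1 a⟩
                  ⟨(x.2 : ℕ) * n + b, block_index_lt x.2 b⟩) *
              Zf n (-1)) p.2 q.2
          else 0) := by
      ext ⟨i, a⟩ ⟨j, b⟩
      simp only [Matrix.sub_apply, Matrix.mul_apply, Matrix.sum_apply, Matrix.of_apply,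
        Fintype.sum_prod_type, hD₁, hD₂, ite_and, ite_mul, mul_ite, zero_mul, mul_zero,
        Finset.sum_ite_eq, Finset.sum_ite_eq', Finset.mem_univ, if_true, hblk,
        Finset.sum_ite_irrel, Finset.sum_const_zero]
    rw [hBC]
    refine (myrank_sum_le _ _).trans ?_
    refine le_trans (Finset.sum_le_sum
      (fun x _ => (myrank_embed x.1 x.2 _).trans (h x.1 x.2))) ?_
    refine le_of_eq ?_
    simp only [Finset.sum_const, Finset.card_univ, Fintype.card_prod, Fintype.card_fin,
      smul_eq_mul]
    ring
  omega
end

section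
/- Let A, B be n×n real matrices with A invertible, and let g₁,…,g_r, h₁,…,h_r ∈ ℝⁿ. Then the matrix M = Σ_{i=1}^r K(A, g_i) · K(Bᵀ, h_i)ᵀ has displacement rank at most 2r with respect to (A⁻¹, B), i.e., rank(A⁻¹M − MB) ≤ 2r. -/
open Matrix Module

/-- The Krylov matrix `K(A, v)`: the `n × n` matrix whose `i`-th column is `Aⁱ v`. -/
def krylov {n : ℕ} (A : Matrix (Fin n) (Fin n) ℝ) (v : Fin n → ℝ) :
    Matrix (Fin n) (Fin n) ℝ :=
  Matrix.of fun i j => (A ^ (j : ℕ)).mulVec v i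

private lemma rank_add_le' {n : ℕ} (X Y : Matrix (Fin n) (Fin n) ℝ) :
    (X + Y).rank ≤ X.rank + Y.rank := by
  classical
  have h : LinearMap.range (X + Y).mulVecLin ≤
      LinearMap.range X.mulVecLin ⊔ LinearMap.range Y.mulVecLin := by
    rintro _ ⟨v, rfl⟩
    exact Submodule.mem_sup.2 ⟨X.mulVecLin v, ⟨v, rfl⟩, Y.mulVecLin v, ⟨v, rfl⟩, by simp⟩
  calc (X + Y).rank
      ≤ finrank ℝ (LinearMap.range X.mulVecLin ⊔ LinearMap.range Y.mulVecLin :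
          Submodule ℝ _) := Submodule.finrank_mono h
    _ ≤ X.rank + Y.rank := Submodule.finrank_add_le_finrank_add_finrank _ _

private lemma rank_vecMulVec_le {n : ℕ} (w v : Fin n → ℝ) :
    (vecMulVec w v).rank ≤ 1 := by
  rw [vecMulVec_eq (Fin 1)]
  exact (rank_mul_le_left _ _).trans ((rank_le_card_width _).trans (by simp))

private lemma kry_prod {n : ℕ} (A B : Matrix (Fin n) (Fin n) ℝ) (g h : Fin n → ℝ) :
    krylov A g * (krylov Bᵀ h)ᵀ
      = ∑ j : Fin n, A ^ (j : ℕ) * vecMulVec g h * B ^ (j : ℕ) := by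
  ext i k
  simp only [mul_apply, krylov, transpose_apply, of_apply, Matrix.sum_apply]
  refine Finset.sum_congr rfl fun j _ => ?_
  rw [← transpose_pow, mulVec_transpose]
  simp [mulVec, vecMul, vecMulVec, dotProduct, mul_apply, Finset.sum_mul,
    Finset.mul_sum]
  refine Finset.sum_congr rfl fun a _ => Finset.sum_congr rfl fun b _ => by ring

private lemma displacement_eq {n : ℕ} (A B : Matrix (Fin n) (Fin n) ℝ)
    (hA : IsUnit A.det) (G : Matrix (Fin n) (Fin n) ℝ) :
    A⁻¹ * (∑ j : Fin n, A ^ (j : ℕ) * G * B ^ (j : ℕ)) -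
      (∑ j : Fin n, A ^ (j : ℕ) * G * B ^ (j : ℕ)) * B
      = A⁻¹ * G - A⁻¹ * A ^ n * G * B ^ n := by
  have hinv : A⁻¹ * A = 1 := nonsing_inv_mul A hA
  have key : ∀ j : ℕ, A ^ j * G * B ^ j * B = A⁻¹ * A ^ (j + 1) * G * B ^ (j + 1) := by
    intro j
    have : A⁻¹ * A ^ (j + 1) = A ^ j := by
      rw [pow_succ', ← mul_assoc, hinv, one_mul]
    rw [this, pow_succ, mul_assoc]
  set F : ℕ → Matrix (Fin n) (Fin n) ℝ := fun j => A⁻¹ * A ^ j * G * B ^ j with hF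
  have tele : ∑ j : Fin n, (F ↑j - F (↑j + 1))
      = ∑ j ∈ Finset.range n, (F j - F (j + 1)) :=
    Fin.sum_univ_eq_sum_range (fun j => F j - F (j + 1)) n
  rw [Finset.mul_sum, Finset.sum_mul, ← Finset.sum_sub_distrib]
  have step : ∀ j : Fin n, A⁻¹ * (A ^ (j : ℕ) * G * B ^ (j : ℕ)) -
      A ^ (j : ℕ) * G * B ^ (j : ℕ) * B = F ↑j - F (↑j + 1) := by
    intro j
    rw [key, hF]
    simp [mul_assoc]
  rw [Finset.sum_congr rfl fun j _ => step j, tele, Finset.sum_range_sub']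
  simp [hF, mul_assoc]

/-- **Krylov-product representation has low displacement rank.**
For invertible `A` and vectors `g₁, …, g_r, h₁, …, h_r`, the matrix
`M = Σᵢ K(A, gᵢ) ⬝ K(Bᵀ, hᵢ)ᵀ` satisfies `rank (A⁻¹ * M - M * B) ≤ 2 * r`. -/
theorem krylov_product_displacement_rank (n r : ℕ)
    (A B : Matrix (Fin n) (Fin n) ℝ) (hA : IsUnit A.det)
    (g h : Fin r → (Fin n → ℝ)) :
    (A⁻¹ * (∑ i : Fin r, krylov A (g i) * (krylov Bᵀ (h i))ᵀ) -
      (∑ i : Fin r, krylov A (g i) * (krylov Bᵀ (h i))ᵀ) * B).rank ≤ 2 * r := by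
  have heq : A⁻¹ * (∑ i : Fin r, krylov A (g i) * (krylov Bᵀ (h i))ᵀ) -
      (∑ i : Fin r, krylov A (g i) * (krylov Bᵀ (h i))ᵀ) * B
      = ∑ i : Fin r, (A⁻¹ * vecMulVec (g i) (h i)
          + -(A⁻¹ * A ^ n * vecMulVec (g i) (h i) * B ^ n)) := by
    rw [Finset.mul_sum, Finset.sum_mul, ← Finset.sum_sub_distrib]
    refine Finset.sum_congr rfl fun i _ => ?_
    rw [kry_prod, displacement_eq A B hA, sub_eq_add_neg]
  rw [heq]
  calc (∑ i : Fin r, (A⁻¹ * vecMulVec (g i) (h i)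
          + -(A⁻¹ * A ^ n * vecMulVec (g i) (h i) * B ^ n))).rank
      ≤ ∑ i : Fin r, (A⁻¹ * vecMulVec (g i) (h i)
          + -(A⁻¹ * A ^ n * vecMulVec (g i) (h i) * B ^ n)).rank := by
        induction (Finset.univ : Finset (Fin r)) using Finset.induction with
        | empty => simp
        | @insert _ _ hx ih =>
            rw [Finset.sum_insert hx, Finset.sum_insert hx]
            exact (rank_add_le' _ _).trans (by omega)
    _ ≤ ∑ _i : Fin r, 2 := by
        refine Finset.sum_le_sum fun i _ => ?_
        refine (rank_add_le' _ _).trans ?_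
        have h1 : (A⁻¹ * vecMulVec (g i) (h i)).rank ≤ 1 :=
          (rank_mul_le_right _ _).trans (_root_.rank_vecMulVec_le _ _)
        have h2 : (-(A⁻¹ * A ^ n * vecMulVec (g i) (h i) * B ^ n)).rank ≤ 1 := by
          rw [← Matrix.neg_mul, ← Matrix.neg_mul]
          exact (rank_mul_le_left _ _).trans
            ((rank_mul_le_right _ _).trans (_root_.rank_vecMulVec_le _ _))
        omega
    _ = 2 * r := by simp [mul_comm]
end

section
/- Let t : {−(n−1),…,n−1} → ℝ and let T be the n×n Toeplitz matrix with entries T_{ij} = t_{i−j}. Then rank(Z₁ T − T Z₋₁) ≤ 2, where Z₁ and Z₋₁ are the n×n unit-f-circulant matrices with f = 1 and f = −1 respectively. That is, every Toeplitz matrix has displacement rank at most 2 with respect to (Z₁, Z₋₁). -/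
open Matrix

lemma my_rank_add_le {m : ℕ} (A B : Matrix (Fin m) (Fin m) ℝ) :
    (A + B).rank ≤ A.rank + B.rank := by
  classical
  rw [Matrix.rank, Matrix.rank, Matrix.rank, Matrix.mulVecLin_add]
  refine le_trans (Submodule.finrank_mono ?_) (Submodule.finrank_add_le_finrank_add_finrank _ _)
  rintro x ⟨v, rfl⟩
  exact Submodule.add_mem_sup ⟨v, rfl⟩ ⟨v, rfl⟩

lemma my_rank_vecMulVec_le {m : ℕ} (u v : Fin m → ℝ) :
    (Matrix.vecMulVec u v).rank ≤ 1 := by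
  rw [Matrix.vecMulVec_eq (Fin 1)]
  exact le_trans (Matrix.rank_mul_le_left _ _)
    (le_trans (Matrix.rank_le_card_width _) (by simp))

lemma rank_le_two_of_support {m : ℕ} (A : Matrix (Fin m) (Fin m) ℝ)
    (h : ∀ i j : Fin m, (i : ℕ) ≠ 0 → (j : ℕ) ≠ m - 1 → A i j = 0) :
    A.rank ≤ 2 := by
  rcases Nat.eq_zero_or_pos m with hm | hm
  · subst hm
    have : A = 0 := by ext i; exact absurd i.2 (by simp)
    simp [this, Matrix.rank_zero]
  · set i0 : Fin m := ⟨0, hm⟩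
    set jl : Fin m := ⟨m - 1, Nat.sub_lt hm Nat.one_pos⟩
    have hA : A = Matrix.vecMulVec (fun i => if i = i0 then (1 : ℝ) else 0) (fun j => A i0 j)
        + Matrix.vecMulVec (fun i => if i = i0 then 0 else A i jl)
          (fun j => if j = jl then (1 : ℝ) else 0) := by
      ext i j
      simp only [Matrix.add_apply, Matrix.vecMulVec_apply]
      by_cases hi : i = i0
      · subst hi; simp
      · by_cases hj : j = jl
        · subst hj; simp [hi]
        · have hi' : (i : ℕ) ≠ 0 := fun h' => hi (Fin.ext h')
          have hj' : (j : ℕ) ≠ m - 1 := fun h' => hj (Fin.ext h')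
          simp [hi, hj, h i j hi' hj']
    calc A.rank ≤ _ + _ := hA ▸ my_rank_add_le _ _
      _ ≤ 1 + 1 := add_le_add (my_rank_vecMulVec_le _ _) (my_rank_vecMulVec_le _ _)
      _ = 2 := rfl

/-- **Toeplitz matrices have displacement rank at most 2 with respect to `(Z₁, Z₋₁)`.** -/
theorem toeplitz_displacement_rank (n : ℕ) (t : ℤ → ℝ) :
    (Zf n 1 * Matrix.of (fun i j : Fin n => t ((i : ℤ) - (j : ℤ))) -
      Matrix.of (fun i j : Fin n => t ((i : ℤ) - (j : ℤ))) * Zf n (-1)).rank ≤ 2 := by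
  apply rank_le_two_of_support
  intro i j hi hj
  have hi1 : 1 ≤ (i : ℕ) := Nat.one_le_iff_ne_zero.mpr hi
  have hj1 : (j : ℕ) + 1 < n := by
    have := j.2
    omega
  simp only [Matrix.sub_apply, Matrix.mul_apply, Zf, Matrix.of_apply]
  have h1 : ∀ k : Fin n,
      (if (i : ℕ) = (k : ℕ) + 1 then (1 : ℝ) else if (i : ℕ) = 0 ∧ (k : ℕ) = n - 1 then 1 else 0)
        * t ((k : ℤ) - (j : ℤ))
      = if k = ⟨(i : ℕ) - 1, by omega⟩ then t ((i : ℤ) - 1 - (j : ℤ)) else 0 := by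
    intro k
    rcases eq_or_ne k (⟨(i : ℕ) - 1, by omega⟩ : Fin n) with hk | hk
    · subst hk
      have : (i : ℕ) = (i : ℕ) - 1 + 1 := by omega
      rw [if_pos this, if_pos rfl, one_mul]
      congr 1
      push_cast
      omega
    · have hk' : (i : ℕ) ≠ (k : ℕ) + 1 := by
        intro h
        apply hk
        apply Fin.ext
        simp; omega
      rw [if_neg hk', if_neg (by exact fun h => hi h.1), if_neg hk, zero_mul]
  have h2 : ∀ k : Fin n,
      t ((i : ℤ) - (k : ℤ)) *
        (if (k : ℕ) = (j : ℕ) + 1 then (1 : ℝ) else if (k : ℕ) = 0 ∧ (j : ℕ) = n - 1 then -1 else 0)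
      = if k = ⟨(j : ℕ) + 1, hj1⟩ then t ((i : ℤ) - 1 - (j : ℤ)) else 0 := by
    intro k
    rcases eq_or_ne k (⟨(j : ℕ) + 1, hj1⟩ : Fin n) with hk | hk
    · subst hk
      rw [if_pos rfl, if_pos rfl, mul_one]
      congr 1
      push_cast
      ring
    · have hk' : (k : ℕ) ≠ (j : ℕ) + 1 := by
        intro h
        exact hk (Fin.ext (by simpa using h))
      rw [if_neg hk', if_neg (by exact fun h => hj h.2), if_neg hk, mul_zero]
  rw [Finset.sum_congr rfl (fun k _ => h1 k), Finset.sum_congr rfl (fun k _ => h2 k)]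
  simp
end

section
/- Let p₀, p₁, …, p_{m−1} be real polynomials satisfying the three-term recurrence p_{i+1}(X) = (a_i X + b_i) p_i(X) + c_i p_{i−1}(X) for 0 ≤ i ≤ m−2 (with the convention p_{−1} = 0), where a_i ≠ 0 for all i. Let λ₀,…,λ_{n−1} ∈ ℝ and let M be the m×n polynomial transform matrix with entries M_{ij} = p_i(λ_j). Then there exists a tridiagonal m×m real matrix A (i.e., A_{ij} = 0 whenever |i−j| > 1) such that A·M − M·diag(λ₀,…,λ_{n−1}) is nonzero only in its last row; in particular rank(A·M − M·diag(λ)) ≤ 1, so every orthogonal polynomial transform has displacement rank 1 with respect to a tridiagonal and a diagonal operator. -/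
open Matrix Polynomial

lemma rank_le_one_of_row_support {m n : ℕ} (D : Matrix (Fin m) (Fin n) ℝ)
    (h : ∀ (i : Fin m) (j : Fin n), (i : ℕ) ≠ m - 1 → D i j = 0) :
    D.rank ≤ 1 := by
  classical
  set u : Fin m → ℝ := fun i => if (i : ℕ) = m - 1 then 1 else 0 with hu
  set v : Fin n → ℝ := fun j =>
    if hm : 0 < m then D ⟨m - 1, Nat.sub_lt hm one_pos⟩ j else 0 with hv
  have hD : D = Matrix.replicateCol (Fin 1) u * Matrix.replicateRow (Fin 1) v := by
    ext i j
    simp only [Matrix.mul_apply, Fin.sum_univ_one, Matrix.replicateCol_apply, Matrix.replicateRow_apply, hu, hv]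
    by_cases hi : (i : ℕ) = m - 1
    · have hm : 0 < m := i.pos
      have : i = ⟨m - 1, Nat.sub_lt hm one_pos⟩ := Fin.ext hi
      simp [hi, hm, this]
    · simp [hi, h i j hi]
  calc D.rank ≤ (Matrix.replicateCol (Fin 1) u).rank := by
        rw [hD]; exact Matrix.rank_mul_le_left _ _
    _ ≤ Fintype.card (Fin 1) := Matrix.rank_le_card_width _
    _ = 1 := by simp

/-- **Orthogonal polynomial transforms have displacement rank 1 with respect to a
tridiagonal operator and a diagonal operator.**
If the polynomials `p₀, …, p_{m-1}` satisfy the three-term recurrence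
`p_{i+1} = (aᵢ X + bᵢ) pᵢ + cᵢ p_{i-1}` (with `p_{-1} = 0`) for `0 ≤ i ≤ m-2`, with
`aᵢ ≠ 0`, and `M` is the polynomial transform matrix `M i j = pᵢ(λⱼ)`, then there is a
tridiagonal matrix `A` such that `A*M - M*diag(λ)` is nonzero only in its last row; in
particular its rank is at most 1. -/
theorem orthogonal_polynomial_transform_displacement (m n : ℕ)
    (a b c : ℕ → ℝ) (ha : ∀ i, a i ≠ 0)
    (p : Fin m → Polynomial ℝ)
    (hrec : ∀ (i : ℕ) (hi : i + 1 < m),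
      p ⟨i + 1, hi⟩ =
        (Polynomial.C (a i) * Polynomial.X + Polynomial.C (b i)) * p ⟨i, by omega⟩ +
          Polynomial.C (c i) * (if h1 : 1 ≤ i then p ⟨i - 1, by omega⟩ else 0))
    (lam : Fin n → ℝ)
    (M : Matrix (Fin m) (Fin n) ℝ)
    (hM : ∀ i j, M i j = (p i).eval (lam j)) :
    ∃ A : Matrix (Fin m) (Fin m) ℝ,
      (∀ i j : Fin m, ((i : ℤ) - (j : ℤ)).natAbs > 1 → A i j = 0) ∧
      (∀ (i : Fin m) (j : Fin n), (i : ℕ) ≠ m - 1 →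
          (A * M - M * Matrix.diagonal lam) i j = 0) ∧
      (A * M - M * Matrix.diagonal lam).rank ≤ 1 := by
  classical
  set A : Matrix (Fin m) (Fin m) ℝ := fun i j =>
    (if (j : ℕ) = (i : ℕ) + 1 then 1 / a i else 0) +
    (if (j : ℕ) = (i : ℕ) then -(b i) / a i else 0) +
    (if (j : ℕ) + 1 = (i : ℕ) then -(c i) / a i else 0) with hA
  have key : ∀ (i : Fin m) (j : Fin n), (i : ℕ) ≠ m - 1 →
      (A * M - M * Matrix.diagonal lam) i j = 0 := by
    intro i j hi
    have hm : 0 < m := i.pos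
    have hi1 : (i : ℕ) + 1 < m := by omega
    -- the recurrence evaluated at lam j
    have hrec' := hrec (i : ℕ) hi1
    have heval := congrArg (Polynomial.eval (lam j)) hrec'
    simp only [Polynomial.eval_add, Polynomial.eval_mul, Polynomial.eval_C, Polynomial.eval_X,
      apply_dite (Polynomial.eval (lam j)), Polynomial.eval_zero] at heval
    have hAM : (A * M) i j = lam j * M i j := by
      rw [Matrix.mul_apply]
      have hsplit : ∀ k : Fin m, A i k * M k j =
          (if k = (⟨(i : ℕ) + 1, hi1⟩ : Fin m) then (1 / a i) * M k j else 0) +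
          (if k = i then (-(b i) / a i) * M k j else 0) +
          (if (k : ℕ) + 1 = (i : ℕ) then (-(c i) / a i) * M k j else 0) := by
        intro k
        simp only [hA, Fin.ext_iff]
        split_ifs <;> ring
      rw [Finset.sum_congr rfl (fun k _ => hsplit k)]
      rw [Finset.sum_add_distrib, Finset.sum_add_distrib]
      rw [Finset.sum_ite_eq' Finset.univ (⟨(i : ℕ) + 1, hi1⟩ : Fin m)
        (fun k => (1 / a i) * M k j)]
      rw [Finset.sum_ite_eq' Finset.univ i (fun k => (-(b i) / a i) * M k j)]
      simp only [Finset.mem_univ, if_true]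
      by_cases h1i : 1 ≤ (i : ℕ)
      · have hprev : ((i : ℕ) - 1) + 1 = (i : ℕ) := by omega
        have hlt : (i : ℕ) - 1 < m := by omega
        have hsum3 : (∑ k : Fin m, if (k : ℕ) + 1 = (i : ℕ) then
            (-(c i) / a i) * M k j else 0) =
            (-(c i) / a i) * M ⟨(i : ℕ) - 1, hlt⟩ j := by
          rw [Finset.sum_eq_single (⟨(i : ℕ) - 1, hlt⟩ : Fin m)]
          · simp [hprev]
          · intro k _ hk
            have : ¬ ((k : ℕ) + 1 = (i : ℕ)) := by
              intro hc
              apply hk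
              apply Fin.ext
              simp only
              omega
            simp [this]
          · simp
        rw [hsum3]
        simp only [hM, h1i, dite_true] at heval ⊢
        have hprev' : (p ⟨(i : ℕ) - 1, hlt⟩).eval (lam j) =
            Polynomial.eval (lam j) (p ⟨(i : ℕ) - 1, by omega⟩) := rfl
        rw [hprev', heval]
        field_simp [ha (i : ℕ)]
        ring
      · have hi0 : (i : ℕ) = 0 := by omega
        have hsum3 : (∑ k : Fin m, if (k : ℕ) + 1 = (i : ℕ) then
            (-(c i) / a i) * M k j else 0) = 0 := by
          apply Finset.sum_eq_zero
          intro k _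
          have : ¬ ((k : ℕ) + 1 = (i : ℕ)) := by omega
          simp [this]
        rw [hsum3]
        simp only [hM, h1i, dite_false, mul_zero, add_zero] at heval ⊢
        rw [heval]
        field_simp [ha (i : ℕ)]
        ring
    simp only [Matrix.sub_apply, Matrix.mul_apply, Matrix.diagonal_apply]
    rw [← Matrix.mul_apply, hAM]
    rw [Finset.sum_eq_single j]
    · simp [mul_comm]
    · intro k _ hk
      simp [hk]
    · simp
  refine ⟨A, ?_, key, rank_le_one_of_row_support _ key⟩
  intro i j hij
  rw [hA]
  have h1 : ¬ ((j : ℕ) = (i : ℕ) + 1) := by omega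
  have h2 : ¬ ((j : ℕ) = (i : ℕ)) := by omega
  have h3 : ¬ ((j : ℕ) + 1 = (i : ℕ)) := by omega
  simp [h1, h2, h3]
end
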